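/- arXiv:1412.1926 — 3 statements merged into one kernel-verified Lean document; each statement's English description precedes it below -/
import Mathlib

section
/- Virtual leave-one-out formula: let n ≥ 2, let R be a symmetric positive definite n×n real matrix and y ∈ ℝ^n. For i ∈ {1,…,n}, let R_i be the (n−1)×(n−1) matrix obtained from R by deleting its i-th row and i-th column, let r_i ∈ ℝ^{n−1} be the i-th column of R with its i-th entry removed, and let y_{−i} ∈ ℝ^{n−1} be y with its i-th entry removed. Then for every i, y_i − r_iᵀ R_i^{-1} y_{−i} = (R^{-1} y)_i / (R^{-1})_{i,i}. Consequently, (1/n) Σ_{i=1}^n ( y_i − r_iᵀ R_i^{-1} y_{−i} )² = (1/n) yᵀ R^{-1} (diag(R^{-1}))^{-2} R^{-1} y, where diag(A) denotes A with all off-diagonal entries set to 0. -/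
open Matrix

private lemma symm_of_hermitian {m : Type*} {R : Matrix m m ℝ} (h : R.IsHermitian) :
    ∀ a b, R a b = R b a := by
  intro a b
  have := congrFun (congrFun h a) b
  simpa [Matrix.conjTranspose_apply] using this.symm

private lemma sub_posdef {n : ℕ} {R : Matrix (Fin (n + 1)) (Fin (n + 1)) ℝ} (hR : R.PosDef)
    (i : Fin (n + 1)) : (R.submatrix i.succAbove i.succAbove).PosDef := by
  have hs := symm_of_hermitian hR.1
  refine Matrix.PosDef.of_dotProduct_mulVec_pos ?_ ?_
  · ext a b
    simp only [Matrix.conjTranspose_apply, Matrix.submatrix_apply, star_trivial]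
    exact hs _ _
  · intro x hx
    set x' : Fin (n + 1) → ℝ := i.insertNth 0 x with hx'def
    have hxi : x' i = 0 := by rw [hx'def]; exact Fin.insertNth_apply_same (α := fun _ => ℝ) i 0 x
    have hxs : ∀ k, x' (i.succAbove k) = x k := by
      intro k; rw [hx'def]; exact Fin.insertNth_apply_succAbove (α := fun _ => ℝ) i 0 x k
    have hx'0 : x' ≠ 0 := by
      intro h
      apply hx
      funext k
      have := congrFun h (i.succAbove k)
      simpa [hxs k] using this
    have h := hR.dotProduct_mulVec_pos hx'0
    have hmv : ∀ j, (R *ᵥ x') j = ∑ k, R j (i.succAbove k) * x k := by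
      intro j
      rw [Matrix.mulVec, dotProduct, Fin.sum_univ_succAbove _ i]
      simp [hxi, hxs]
    have key : star x ⬝ᵥ ((R.submatrix i.succAbove i.succAbove) *ᵥ x)
        = star x' ⬝ᵥ (R *ᵥ x') := by
      rw [dotProduct, dotProduct, Fin.sum_univ_succAbove _ i]
      simp only [Pi.star_apply, hxi, star_zero, zero_mul, zero_add, hxs, hmv]
      simp [Matrix.mulVec, dotProduct, Matrix.submatrix_apply]
    rw [key]
    exact h

/-- **Virtual leave-one-out formula.** For a symmetric positive definite `n × n` matrix `R`
and `y ∈ ℝⁿ`, the leave-one-out residual `y i - r_iᵀ R_i⁻¹ y_{-i}` (where `R_i` is `R` with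
row and column `i` deleted, `r_i` is the `i`-th column of `R` with entry `i` removed and
`y_{-i}` is `y` with entry `i` removed) equals `(R⁻¹ y)_i / (R⁻¹)_{i,i}`; consequently the
leave-one-out mean square error has the closed form
`(1/n) yᵀ R⁻¹ (diag(R⁻¹))⁻² R⁻¹ y`. -/
theorem virtual_loo_formula (n : ℕ) (hn : 2 ≤ n + 1)
    (R : Matrix (Fin (n + 1)) (Fin (n + 1)) ℝ) (hR : R.PosDef) (y : Fin (n + 1) → ℝ) :
    (∀ i : Fin (n + 1),
      y i - (fun j => R (i.succAbove j) i) ⬝ᵥ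
          ((R.submatrix i.succAbove i.succAbove)⁻¹ *ᵥ fun j => y (i.succAbove j))
        = (R⁻¹ *ᵥ y) i / R⁻¹ i i) ∧
    (1 / (n + 1) : ℝ) * ∑ i : Fin (n + 1),
        (y i - (fun j => R (i.succAbove j) i) ⬝ᵥ
          ((R.submatrix i.succAbove i.succAbove)⁻¹ *ᵥ fun j => y (i.succAbove j))) ^ 2
      = (1 / (n + 1) : ℝ) *
        (y ⬝ᵥ ((R⁻¹ * (Matrix.diagonal fun i => R⁻¹ i i)⁻¹ ^ 2 * R⁻¹) *ᵥ y)) := by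
  have hRinv : R⁻¹.PosDef := hR.inv
  have hsinv : ∀ a b, R⁻¹ a b = R⁻¹ b a := symm_of_hermitian hRinv.1
  have hdiag : ∀ i, 0 < R⁻¹ i i := by
    intro i
    have hne : (Pi.single i 1 : Fin (n + 1) → ℝ) ≠ 0 := by
      intro h
      have := congrFun h i
      simp at this
    have := hRinv.dotProduct_mulVec_pos hne
    simpa [dotProduct, Matrix.mulVec, Pi.single_apply, Finset.mul_sum,
      Finset.sum_ite_eq, Finset.sum_ite_eq'] using this
  have key : ∀ i : Fin (n + 1),
      y i - (fun j => R (i.succAbove j) i) ⬝ᵥ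
          ((R.submatrix i.succAbove i.succAbove)⁻¹ *ᵥ fun j => y (i.succAbove j))
        = (R⁻¹ *ᵥ y) i / R⁻¹ i i := by
    intro i
    set A := R.submatrix i.succAbove i.succAbove with hAdef
    have hApd : A.PosDef := sub_posdef hR i
    haveI : Invertible A := hApd.isUnit.invertible
    have hAsymm : ∀ a b, A a b = A b a := symm_of_hermitian hApd.1
    have hAinvsymm : ∀ a b, A⁻¹ a b = A⁻¹ b a := symm_of_hermitian hApd.inv.1
    set w : Fin (n + 1) → ℝ := fun j => R⁻¹ j i with hwdef
    set r : Fin n → ℝ := fun j => R (i.succAbove j) i with hrdef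
    set y' : Fin n → ℝ := fun j => y (i.succAbove j) with hy'def
    -- R *ᵥ w = e_i
    have hRw : R *ᵥ w = Pi.single i 1 := by
      funext j
      haveI : Invertible R := hR.isUnit.invertible
      have := congrFun (congrFun (Matrix.mul_inv_of_invertible R) j) i
      simpa [Matrix.mulVec, dotProduct, Matrix.mul_apply, Matrix.one_apply,
          Pi.single_apply, eq_comm] using this
    set u : Fin n → ℝ := fun k => w (i.succAbove k) with hudef
    have hAu : A *ᵥ u = fun k => -(w i) * r k := by
      funext k
      have hj := congrFun hRw (i.succAbove k)
      rw [Matrix.mulVec, dotProduct, Fin.sum_univ_succAbove _ i,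
        Pi.single_eq_of_ne (Fin.succAbove_ne i k)] at hj
      show ∑ k', R (i.succAbove k) (i.succAbove k') * w (i.succAbove k')
          = -(w i) * R (i.succAbove k) i
      linarith [hj]
    have hu : ∀ k, u k = -(w i) * (A⁻¹ *ᵥ r) k := by
      have h1 : A⁻¹ *ᵥ (fun k => -(w i) * r k) = u := Matrix.inv_mulVec_eq_vec hAu.symm
      have h2 : (fun k => -(w i) * r k) = (-(w i)) • r := rfl
      rw [h2, Matrix.mulVec_smul] at h1
      intro k
      rw [← h1]
      rfl
    -- swap the inverse across the dot product using symmetry of A⁻¹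
    have hswap : r ⬝ᵥ (A⁻¹ *ᵥ y') = (A⁻¹ *ᵥ r) ⬝ᵥ y' := by
      rw [Matrix.dotProduct_mulVec]
      congr 1
      funext k
      simp only [Matrix.vecMul, Matrix.mulVec, dotProduct]
      exact Finset.sum_congr rfl fun j _ => by show r j * A⁻¹ j k = A⁻¹ k j * r j; rw [hAinvsymm k j]; ring
    have hmain : (R⁻¹ *ᵥ y) i = w i * (y i - r ⬝ᵥ (A⁻¹ *ᵥ y')) := by
      have h0 : (R⁻¹ *ᵥ y) i = ∑ k, w k * y k := by
        rw [Matrix.mulVec, dotProduct]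
        exact Finset.sum_congr rfl fun k _ => by rw [hsinv i k]
      rw [h0, Fin.sum_univ_succAbove (fun k => w k * y k) i]
      have h1 : ∀ k, w (i.succAbove k) * y (i.succAbove k)
          = -(w i) * ((A⁻¹ *ᵥ r) k * y' k) := by
        intro k
        rw [show w (i.succAbove k) = u k from rfl, hu k, hy'def]
        ring
      rw [Finset.sum_congr rfl fun k _ => h1 k, ← Finset.mul_sum, hswap,
        dotProduct]
      ring
    have hne : w i ≠ 0 := (hdiag i).ne'
    show y i - r ⬝ᵥ (A⁻¹ *ᵥ y') = (R⁻¹ *ᵥ y) i / R⁻¹ i i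
    rw [hmain]
    rw [show R⁻¹ i i = w i from rfl]
    field_simp
  refine ⟨key, ?_⟩
  congr 1
  have hstep : ∀ i : Fin (n + 1),
      (y i - (fun j => R (i.succAbove j) i) ⬝ᵥ
        ((R.submatrix i.succAbove i.succAbove)⁻¹ *ᵥ fun j => y (i.succAbove j))) ^ 2
      = ((R⁻¹ *ᵥ y) i / R⁻¹ i i) ^ 2 := fun i => by rw [key i]
  rw [Finset.sum_congr rfl fun i _ => hstep i]
  -- now compute the right-hand side
  have hDinv : (Matrix.diagonal fun i => R⁻¹ i i)⁻¹
      = Matrix.diagonal (fun i => (R⁻¹ i i)⁻¹) := by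
    apply Matrix.inv_eq_right_inv
    rw [Matrix.diagonal_mul_diagonal]
    have : (fun i => R⁻¹ i i * (R⁻¹ i i)⁻¹) = fun _ => (1 : ℝ) := by
      funext i
      exact mul_inv_cancel₀ (hdiag i).ne'
    rw [this, Matrix.diagonal_one]
  rw [hDinv, sq, Matrix.diagonal_mul_diagonal, ← Matrix.mulVec_mulVec,
    ← Matrix.mulVec_mulVec, Matrix.dotProduct_mulVec]
  have hy : y ᵥ* R⁻¹ = R⁻¹ *ᵥ y := by
    have hT : (R⁻¹)ᵀ = R⁻¹ := by
      ext a b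
      exact hsinv b a
    rw [← hT, Matrix.vecMul_transpose, hT]
  rw [hy]
  set v : Fin (n + 1) → ℝ := R⁻¹ *ᵥ y with hvdef
  rw [dotProduct]
  refine Finset.sum_congr rfl fun i _ => ?_
  rw [Matrix.mulVec_diagonal]
  rw [div_pow]
  rw [sq, sq]
  field_simp
end

section
/- There exists a finite constant C, depending only on d, such that for all a, b ∈ ℝ^d, ∫_{ℝ^d} [1/(1 + |a − c|^{d+1})] · [1/(1 + |b − c|^{d+1})] dc ≤ C / (1 + |a − b|^{d+1}). -/
open MeasureTheory Real FiniteDimensional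

lemma aux_pow_bound (n : ℕ) {t : ℝ} (ht : 0 ≤ t) : (1 + t) ^ n ≤ 2 ^ n * (1 + t ^ n) := by
  have h1 : (1 + t) ≤ 2 * max 1 t := by
    rcases le_total t 1 with h | h
    · simp [max_eq_left h]; linarith
    · simp [max_eq_right h]; linarith
  calc (1 + t) ^ n ≤ (2 * max 1 t) ^ n := pow_le_pow_left₀ (by linarith) h1 n
    _ = 2 ^ n * (max 1 t) ^ n := mul_pow _ _ _
    _ ≤ 2 ^ n * (1 + t ^ n) := by
        gcongr
        rcases le_total t 1 with h | h
        · rw [max_eq_left h]; simp; positivity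
        · rw [max_eq_right h]; nlinarith [pow_nonneg ht n]

lemma aux_integrable (d : ℕ) :
    Integrable (fun x : Fin d → ℝ => 1 / (1 + ‖x‖ ^ (d + 1))) volume := by
  have hnr : (Module.finrank ℝ (Fin d → ℝ) : ℝ) < (d + 1 : ℕ) := by
    simp [Module.finrank_fintype_fun_eq_card]
  refine ((integrable_one_add_norm (μ := (volume : Measure (Fin d → ℝ)))
      (r := (d + 1 : ℕ)) hnr).const_mul ((2 : ℝ) ^ (d + 1))).mono' ?_ ?_
  · apply Continuous.aestronglyMeasurable
    exact continuous_const.div (by continuity) (fun x => by positivity)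
  · filter_upwards with x
    have hx : (0 : ℝ) ≤ ‖x‖ := norm_nonneg x
    have h1 : (0 : ℝ) < 1 + ‖x‖ ^ (d + 1) := by positivity
    rw [Real.norm_eq_abs, abs_of_nonneg (by positivity)]
    rw [rpow_neg (by positivity), rpow_natCast]
    rw [← div_eq_mul_inv, div_le_div_iff₀ h1 (by positivity)]
    nlinarith [aux_pow_bound (d + 1) hx]

lemma aux_key_half (n : ℕ) {s t u : ℝ} (hs : 0 ≤ s) (ht : 0 ≤ t) (hu : 0 ≤ u)
    (h : u ≤ s + t) (hts : t ≤ s) :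
    (1 / (1 + s ^ n)) * (1 / (1 + t ^ n)) ≤
      (2 ^ n * (1 / (1 + u ^ n))) * ((1 / (1 + s ^ n)) + (1 / (1 + t ^ n))) := by
  have hps : (0:ℝ) < 1 + s ^ n := by positivity
  have hpt : (0:ℝ) < 1 + t ^ n := by positivity
  have hpu : (0:ℝ) < 1 + u ^ n := by positivity
  have hu2 : u ^ n ≤ 2 ^ n * s ^ n := by
    rw [← mul_pow]
    exact pow_le_pow_left₀ hu (by linarith) n
  have key : 1 / (1 + s ^ n) ≤ 2 ^ n * (1 / (1 + u ^ n)) := by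
    rw [mul_one_div, div_le_div_iff₀ hps hpu]
    have : (1:ℝ) ≤ 2 ^ n := one_le_pow₀ (by norm_num)
    nlinarith
  calc (1 / (1 + s ^ n)) * (1 / (1 + t ^ n))
      ≤ (2 ^ n * (1 / (1 + u ^ n))) * (1 / (1 + t ^ n)) := by
        apply mul_le_mul_of_nonneg_right key; positivity
    _ ≤ (2 ^ n * (1 / (1 + u ^ n))) * ((1 / (1 + s ^ n)) + (1 / (1 + t ^ n))) := by
        apply mul_le_mul_of_nonneg_left _ (by positivity)
        apply le_add_of_nonneg_left; positivity

lemma aux_key (n : ℕ) {s t u : ℝ} (hs : 0 ≤ s) (ht : 0 ≤ t) (hu : 0 ≤ u) (h : u ≤ s + t) :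
    (1 / (1 + s ^ n)) * (1 / (1 + t ^ n)) ≤
      (2 ^ n * (1 / (1 + u ^ n))) * ((1 / (1 + s ^ n)) + (1 / (1 + t ^ n))) := by
  rcases le_total t s with hts | hst
  · exact aux_key_half n hs ht hu h hts
  · have := aux_key_half n ht hs hu (by linarith) hst
    linarith [this]


/-- There is a constant `C`, depending only on `d`, such that for all `a, b ∈ ℝ^d`
(with the max-norm),
`∫_{ℝ^d} 1/(1 + |a−c|^{d+1}) ⋅ 1/(1 + |b−c|^{d+1}) dc ≤ C / (1 + |a−b|^{d+1})`. -/
theorem convolution_polynomial_decay_bound (d : ℕ) (hd : 0 < d) :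
    ∃ C : ℝ, ∀ a b : Fin d → ℝ,
      ∫ c : Fin d → ℝ,
          (1 / (1 + ‖a - c‖ ^ (d + 1))) * (1 / (1 + ‖b - c‖ ^ (d + 1)))
        ≤ C * (1 / (1 + ‖a - b‖ ^ (d + 1))) := by
  set f : (Fin d → ℝ) → ℝ := fun x => 1 / (1 + ‖x‖ ^ (d + 1)) with hf
  set I : ℝ := ∫ x : Fin d → ℝ, f x with hI
  refine ⟨2 ^ (d + 1) * (2 * I), fun a b => ?_⟩
  have hfa : Integrable (fun c => f (a - c)) volume := (aux_integrable d).comp_sub_left a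
  have hfb : Integrable (fun c => f (b - c)) volume := (aux_integrable d).comp_sub_left b
  set K : ℝ := 2 ^ (d + 1) * (1 / (1 + ‖a - b‖ ^ (d + 1))) with hK
  have step1 : ∫ c : Fin d → ℝ, f (a - c) * f (b - c)
      ≤ ∫ c : Fin d → ℝ, K * (f (a - c) + f (b - c)) := by
    apply integral_mono_of_nonneg
    · filter_upwards with c
      simp only [hf]
      positivity
    · exact (hfa.add hfb).const_mul K
    · filter_upwards with c
      have htri : ‖a - b‖ ≤ ‖a - c‖ + ‖b - c‖ := by
        have : a - b = (a - c) - (b - c) := by abel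
        rw [this]
        exact norm_sub_le _ _
      exact aux_key (d + 1) (norm_nonneg _) (norm_nonneg _) (norm_nonneg _) htri
  have step2 : ∫ c : Fin d → ℝ, K * (f (a - c) + f (b - c)) = K * (2 * I) := by
    rw [MeasureTheory.integral_const_mul, integral_add hfa hfb,
      integral_sub_left_eq_self f volume a, integral_sub_left_eq_self f volume b]
    ring
  calc ∫ c : Fin d → ℝ, f (a - c) * f (b - c) ≤ K * (2 * I) := step1.trans_eq step2
    _ = 2 ^ (d + 1) * (2 * I) * (1 / (1 + ‖a - b‖ ^ (d + 1))) := by rw [hK]; ring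
end

section
/- There exists a finite constant C, depending only on d, such that for all n, all choices of the partition parameter N_2 ∈ ℕ*, and all x_1, x_2 ∈ [0, n^{1/d}]^d, ∫_{[0, n^{1/d}]^d} [1/(1 + |x_1 − x|^{d+1})] · [1/(1 + |x_2 − x|^{d+1})] · 1_{C(x) ≠ C(x_1)} · 1_{C(x) ≠ C(x_2)} dx ≤ C · f(D_Δ(x_1, x_2)) / (1 + |x_1 − x_2|^{d+1}). -/
open MeasureTheory Filter
open scoped ENNReal Classical

noncomputable section

/-- `x` and `y` lie in the same cell of the partition of the cube `[0, L]^d` into `N^d`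
congruent subcubes (products of the intervals `[(i−1)L/N, iL/N)`, `i = 1, …, N`, the last
interval being closed on the right). Points outside the cube lie in no cell. -/
def sameCell (d : ℕ) (L : ℝ) (N : ℕ) (x y : Fin d → ℝ) : Prop :=
  x ∈ Set.Icc (0 : Fin d → ℝ) (fun _ => L) ∧ y ∈ Set.Icc (0 : Fin d → ℝ) (fun _ => L) ∧
    ∀ i, min ((N : ℤ) - 1) ⌊x i * N / L⌋ = min ((N : ℤ) - 1) ⌊y i * N / L⌋

/-- `f(T) = ∫_{ℝ^d ∖ [−T,T]^d} 1/(1+|t|^{d+1}) dt` (max-norm on `Fin d → ℝ`). -/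
def fTail (d : ℕ) (T : ℝ) : ℝ :=
  ∫ t in (Set.Icc (fun _ => -T) (fun _ : Fin d => T))ᶜ, 1 / (1 + ‖t‖ ^ (d + 1))

/-- `D_Δ(x)`: the distance from `x` to the complement of its cell `C(x)`. -/
def cellDist (d : ℕ) (L : ℝ) (N : ℕ) (x : Fin d → ℝ) : ℝ :=
  Metric.infDist x {y | ¬ sameCell d L N x y}

/-! ### Auxiliary lemmas -/

lemma sameCell_symm {d : ℕ} {L : ℝ} {N : ℕ} {x y : Fin d → ℝ}
    (h : sameCell d L N x y) : sameCell d L N y x :=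
  ⟨h.2.1, h.1, fun i => (h.2.2 i).symm⟩

/-- The basic kernel `t ↦ 1/(1+‖t‖^{d+1})` is integrable on `ℝ^d`. -/
lemma J_integrable (d : ℕ) :
    Integrable (fun t : Fin d → ℝ => 1 / (1 + ‖t‖ ^ (d + 1))) := by
  have hnr : (Module.finrank ℝ (Fin d → ℝ) : ℝ) < (d + 1 : ℕ) := by
    simp [Module.finrank_fintype_fun_eq_card]
  have hint : Integrable (fun t : Fin d → ℝ => (1 + ‖t‖) ^ (-((d + 1 : ℕ) : ℝ))) :=
    integrable_one_add_norm hnr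
  refine ((hint.const_mul ((2 : ℝ) ^ (d + 1))).mono' ?_ (Eventually.of_forall fun t => ?_))
  · refine (Continuous.aestronglyMeasurable ?_)
    refine continuous_const.div (by fun_prop) (fun t => ?_)
    positivity
  · have ha : (0 : ℝ) ≤ ‖t‖ := norm_nonneg _
    have h1t : (0 : ℝ) < 1 + ‖t‖ := by positivity
    have hrpow : (1 + ‖t‖) ^ (-((d + 1 : ℕ) : ℝ)) = ((1 + ‖t‖) ^ (d + 1))⁻¹ := by
      rw [Real.rpow_neg h1t.le, Real.rpow_natCast]
    rw [Real.norm_eq_abs, abs_of_nonneg (by positivity), hrpow,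
      show (2:ℝ) ^ (d+1) * ((1 + ‖t‖) ^ (d+1))⁻¹ = 2 ^ (d+1) / (1 + ‖t‖) ^ (d+1) from
        (div_eq_mul_inv _ _).symm,
      div_le_div_iff₀ (by positivity) (by positivity), one_mul]
    -- goal : (1 + ‖t‖) ^ (d + 1) ≤ 2 ^ (d + 1) * (1 + ‖t‖ ^ (d + 1))
    have hmax : (1 + ‖t‖) ^ (d + 1) ≤ (2 * max 1 ‖t‖) ^ (d + 1) := by
      apply pow_le_pow_left₀ (by positivity)
      rcases le_total ‖t‖ 1 with h | h
      · rw [max_eq_left h]; linarith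
      · rw [max_eq_right h]; linarith
    have hmax2 : (max 1 ‖t‖) ^ (d + 1) ≤ 1 + ‖t‖ ^ (d + 1) := by
      rcases le_total ‖t‖ 1 with h | h
      · rw [max_eq_left h, one_pow]; nlinarith [pow_nonneg ha (d + 1)]
      · rw [max_eq_right h]; nlinarith [pow_nonneg ha (d + 1)]
    calc (1 + ‖t‖) ^ (d + 1) ≤ (2 * max 1 ‖t‖) ^ (d + 1) := hmax
      _ = 2 ^ (d + 1) * (max 1 ‖t‖) ^ (d + 1) := by rw [mul_pow]
      _ ≤ 2 ^ (d + 1) * (1 + ‖t‖ ^ (d + 1)) := by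
          apply mul_le_mul_of_nonneg_left hmax2 (by positivity)

lemma measurableSet_sameCell (d : ℕ) (L : ℝ) (N : ℕ) (y : Fin d → ℝ) :
    MeasurableSet {x : Fin d → ℝ | sameCell d L N x y} := by
  by_cases hy : y ∈ Set.Icc (0 : Fin d → ℝ) (fun _ => L)
  · have hset : {x : Fin d → ℝ | sameCell d L N x y} =
        Set.Icc (0 : Fin d → ℝ) (fun _ => L) ∩
          ⋂ i, (fun x : Fin d → ℝ => min ((N : ℤ) - 1) ⌊x i * N / L⌋) ⁻¹'
            {min ((N : ℤ) - 1) ⌊y i * N / L⌋} := by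
      ext x
      simp only [sameCell, Set.mem_setOf_eq, Set.mem_inter_iff, Set.mem_iInter,
        Set.mem_preimage, Set.mem_singleton_iff, hy, true_and]
    rw [hset]
    refine measurableSet_Icc.inter (MeasurableSet.iInter fun i => ?_)
    have hm : Measurable (fun x : Fin d → ℝ => min ((N : ℤ) - 1) ⌊x i * N / L⌋) :=
      measurable_const.min (((measurable_pi_apply i).mul_const _).div_const _).floor
    exact hm (measurableSet_singleton _)
  · have hset : {x : Fin d → ℝ | sameCell d L N x y} = ∅ := by
      ext x; simp [sameCell, hy]
    rw [hset]; exact MeasurableSet.empty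

lemma fTail_nonneg (d : ℕ) (T : ℝ) : 0 ≤ fTail d T := by
  refine setIntegral_nonneg measurableSet_Icc.compl (fun t _ => by positivity)

/-- `fTail` is antitone on nonnegative arguments. -/
lemma fTail_anti (d : ℕ) {S T : ℝ} (hS : 0 ≤ S) (hST : S ≤ T) : fTail d T ≤ fTail d S := by
  unfold fTail
  apply setIntegral_mono_set ((J_integrable d).integrableOn)
  · exact Eventually.of_forall (fun t => by positivity)
  · apply HasSubset.Subset.eventuallyLE
    apply Set.compl_subset_compl.mpr
    apply Set.Icc_subset_Icc
    · intro i; simp; linarith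
    · intro i; simp; linarith

/-- Key estimate: the integral of the kernel centered at `x₀` against the indicator of
"not same cell as `x₀`" is at most `fTail d (cellDist x₀)`. -/
lemma integral_kernel_indicator_le (d : ℕ) (hd : 0 < d) (L : ℝ) (N : ℕ) (x₀ : Fin d → ℝ) :
    ∫ x : Fin d → ℝ, (1 / (1 + ‖x₀ - x‖ ^ (d + 1))) *
        (if sameCell d L N x x₀ then (0 : ℝ) else 1)
      ≤ fTail d (cellDist d L N x₀) := by
  haveI : Nonempty (Fin d) := ⟨⟨0, hd⟩⟩
  haveI : Nontrivial (Fin d → ℝ) :=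
    ⟨⟨0, fun _ => 1, fun h => by simpa using congrFun h ⟨0, hd⟩⟩⟩
  set D := cellDist d L N x₀ with hD
  have hD0 : 0 ≤ D := Metric.infDist_nonneg
  set S := (Set.Icc (fun _ => -D) (fun _ : Fin d => D))ᶜ with hS
  have hSm : MeasurableSet S := measurableSet_Icc.compl
  set G : (Fin d → ℝ) → ℝ := S.indicator (fun t => 1 / (1 + ‖t‖ ^ (d + 1))) with hG
  have hGint : Integrable G := (J_integrable d).indicator hSm
  have htrans : ∫ x : Fin d → ℝ, G (x₀ - x) = fTail d D := by
    rw [integral_sub_left_eq_self G volume x₀, hG, integral_indicator hSm]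
    rfl
  rw [← htrans]
  -- a.e. pointwise bound
  have hsphere : ∀ᵐ x : Fin d → ℝ, x ∉ Metric.sphere x₀ D :=
    measure_eq_zero_iff_ae_notMem.mp (Measure.addHaar_sphere (μ := (volume : Measure (Fin d → ℝ))) x₀ D)
  refine integral_mono_of_nonneg (Eventually.of_forall fun x => ?_)
    (hGint.comp_sub_left x₀) ?_
  · have : (0:ℝ) ≤ (if sameCell d L N x x₀ then (0 : ℝ) else 1) := by split <;> norm_num
    positivity
  · filter_upwards [hsphere] with x hx
    by_cases hcell : sameCell d L N x x₀
    · simp only [hcell, if_pos, mul_zero]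
      exact Set.indicator_nonneg (fun t _ => by positivity) _
    · simp only [hcell, if_neg, not_false_iff, mul_one]
      have hmem : x₀ - x ∈ S := by
        by_contra hmem
        simp only [hS, Set.notMem_compl_iff] at hmem
        -- then ‖x₀ - x‖ ≤ D
        have hnorm : ‖x₀ - x‖ ≤ D := by
          rw [pi_norm_le_iff_of_nonneg hD0]
          intro i
          have h1 := hmem.1 i
          have h2 := hmem.2 i
          simp only [Pi.sub_apply] at h1 h2 ⊢
          rw [Real.norm_eq_abs, abs_le]
          exact ⟨h1, h2⟩
        have hne : ‖x₀ - x‖ ≠ D := by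
          intro h
          apply hx
          simp only [Metric.mem_sphere, dist_eq_norm]
          rw [← norm_sub_rev]; exact h
        have hlt : dist x₀ x < D := by
          rw [dist_eq_norm]; exact lt_of_le_of_ne hnorm hne
        have hnotin : x ∉ {y | ¬ sameCell d L N x₀ y} := by
          intro hin
          have h5 : D ≤ dist x₀ x := Metric.infDist_le_dist_of_mem (x := x₀) hin
          linarith
        simp only [Set.mem_setOf_eq, not_not] at hnotin
        exact hcell (sameCell_symm hnotin)
      rw [hG, Set.indicator_of_mem hmem]

/-- There is a constant `C`, depending only on `d`, such that for all `n`, all partition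
parameters `N₂ ≥ 1`, and all `x₁, x₂` in the cube `[0, n^{1/d}]^d`,
`∫_{ℝ^d} 1/(1+|x₁−x|^{d+1}) ⋅ 1/(1+|x₂−x|^{d+1}) 1_{C(x)≠C(x₁)} 1_{C(x)≠C(x₂)} dx
  ≤ C f(D_Δ(x₁,x₂)) / (1+|x₁−x₂|^{d+1})`. -/
theorem truncated_convolution_bound (d : ℕ) (hd : 0 < d) :
    ∃ C : ℝ, ∀ (n N : ℕ), 1 ≤ n → 1 ≤ N →
      ∀ x₁ ∈ Set.Icc (0 : Fin d → ℝ) (fun _ => (n : ℝ) ^ ((d : ℝ)⁻¹)),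
      ∀ x₂ ∈ Set.Icc (0 : Fin d → ℝ) (fun _ => (n : ℝ) ^ ((d : ℝ)⁻¹)),
        ∫ x : Fin d → ℝ,
            (1 / (1 + ‖x₁ - x‖ ^ (d + 1))) * (1 / (1 + ‖x₂ - x‖ ^ (d + 1))) *
              (if sameCell d ((n : ℝ) ^ ((d : ℝ)⁻¹)) N x x₁ then 0 else 1) *
              (if sameCell d ((n : ℝ) ^ ((d : ℝ)⁻¹)) N x x₂ then 0 else 1)
          ≤ C * fTail d (min (cellDist d ((n : ℝ) ^ ((d : ℝ)⁻¹)) N x₁)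
                (cellDist d ((n : ℝ) ^ ((d : ℝ)⁻¹)) N x₂)) *
              (1 / (1 + ‖x₁ - x₂‖ ^ (d + 1))) := by
  refine ⟨2 ^ (d + 2), fun n N hn hN x₁ hx₁ x₂ hx₂ => ?_⟩
  set L : ℝ := (n : ℝ) ^ ((d : ℝ)⁻¹) with hL
  set D₁ := cellDist d L N x₁ with hD₁
  set D₂ := cellDist d L N x₂ with hD₂
  set Dm := min D₁ D₂ with hDm
  set r := ‖x₁ - x₂‖ with hr
  have hr0 : 0 ≤ r := norm_nonneg _
  set c : ℝ := 2 ^ (d + 1) * (1 / (1 + r ^ (d + 1))) with hc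
  have hc0 : 0 ≤ c := by positivity
  -- the two half-kernels
  set h₁ : (Fin d → ℝ) → ℝ := fun x =>
    (1 / (1 + ‖x₁ - x‖ ^ (d + 1))) * (if sameCell d L N x x₁ then 0 else 1) with hh₁def
  set h₂ : (Fin d → ℝ) → ℝ := fun x =>
    (1 / (1 + ‖x₂ - x‖ ^ (d + 1))) * (if sameCell d L N x x₂ then 0 else 1) with hh₂def
  have hint : ∀ (x₀ : Fin d → ℝ), Integrable (fun x : Fin d → ℝ =>
      (1 / (1 + ‖x₀ - x‖ ^ (d + 1))) * (if sameCell d L N x x₀ then (0:ℝ) else 1)) := by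
    intro x₀
    have hbase : Integrable (fun x : Fin d → ℝ => 1 / (1 + ‖x₀ - x‖ ^ (d + 1))) :=
      (J_integrable d).comp_sub_left x₀
    refine hbase.mono' ?_ (Eventually.of_forall fun x => ?_)
    · refine AEStronglyMeasurable.mul hbase.aestronglyMeasurable ?_
      refine (Measurable.ite (measurableSet_sameCell d L N x₀)
        measurable_const measurable_const).aestronglyMeasurable
    · have hi : (0:ℝ) ≤ (if sameCell d L N x x₀ then (0:ℝ) else 1) ∧
          (if sameCell d L N x x₀ then (0:ℝ) else 1) ≤ 1 := by constructor <;> (split <;> norm_num)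
      rw [Real.norm_eq_abs, abs_of_nonneg (by positivity)]
      calc (1 / (1 + ‖x₀ - x‖ ^ (d + 1))) * (if sameCell d L N x x₀ then (0:ℝ) else 1)
          ≤ (1 / (1 + ‖x₀ - x‖ ^ (d + 1))) * 1 :=
            mul_le_mul_of_nonneg_left hi.2 (by positivity)
        _ = 1 / (1 + ‖x₀ - x‖ ^ (d + 1)) := mul_one _
  have hint₁ : Integrable h₁ := hint x₁
  have hint₂ : Integrable h₂ := hint x₂
  -- key pointwise estimate
  have key : ∀ b : ℝ, 0 ≤ b → r ≤ 2 * b → 1 / (1 + b ^ (d + 1)) ≤ c := by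
    intro b hb hrb
    rw [hc, mul_one_div, div_le_div_iff₀ (by positivity) (by positivity), one_mul]
    have h1 : r ^ (d + 1) ≤ (2 * b) ^ (d + 1) := pow_le_pow_left₀ hr0 hrb _
    have h2 : (2 * b) ^ (d + 1) = 2 ^ (d + 1) * b ^ (d + 1) := mul_pow _ _ _
    have h3 : (1:ℝ) ≤ 2 ^ (d + 1) := by
      have := pow_le_pow_left₀ (by norm_num : (0:ℝ) ≤ 1) (by norm_num : (1:ℝ) ≤ 2) (d + 1)
      simpa using this
    nlinarith [pow_nonneg hb (d + 1)]
  -- pointwise bound of the integrand by c * (h₁ + h₂)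
  have hptwise : ∀ x : Fin d → ℝ,
      (1 / (1 + ‖x₁ - x‖ ^ (d + 1))) * (1 / (1 + ‖x₂ - x‖ ^ (d + 1))) *
        (if sameCell d L N x x₁ then (0:ℝ) else 1) *
        (if sameCell d L N x x₂ then (0:ℝ) else 1)
      ≤ c * (h₁ x + h₂ x) := by
    intro x
    set a₁ : ℝ := 1 / (1 + ‖x₁ - x‖ ^ (d + 1)) with ha₁
    set a₂ : ℝ := 1 / (1 + ‖x₂ - x‖ ^ (d + 1)) with ha₂
    set i₁ : ℝ := if sameCell d L N x x₁ then (0:ℝ) else 1 with hi₁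
    set i₂ : ℝ := if sameCell d L N x x₂ then (0:ℝ) else 1 with hi₂
    have ha₁0 : 0 ≤ a₁ := by positivity
    have ha₂0 : 0 ≤ a₂ := by positivity
    have hi₁01 : 0 ≤ i₁ ∧ i₁ ≤ 1 := by constructor <;> (rw [hi₁]; split <;> norm_num)
    have hi₂01 : 0 ≤ i₂ ∧ i₂ ≤ 1 := by constructor <;> (rw [hi₂]; split <;> norm_num)
    have hh₁x : h₁ x = a₁ * i₁ := rfl
    have hh₂x : h₂ x = a₂ * i₂ := rfl
    have htri : r ≤ ‖x₁ - x‖ + ‖x₂ - x‖ := by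
      have : x₁ - x₂ = (x₁ - x) - (x₂ - x) := by abel
      rw [hr, this]
      exact norm_sub_le _ _
    rcases le_total r (2 * ‖x₂ - x‖) with hcase | hcase
    · have ha₂c : a₂ ≤ c := key _ (norm_nonneg _) hcase
      have h1 : a₁ * a₂ * i₁ * i₂ ≤ a₁ * i₁ * c := by
        have : a₁ * a₂ * i₁ * i₂ = (a₁ * i₁) * (a₂ * i₂) := by ring
        rw [this]
        have h2 : a₂ * i₂ ≤ c := by
          calc a₂ * i₂ ≤ a₂ * 1 := mul_le_mul_of_nonneg_left hi₂01.2 ha₂0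
            _ = a₂ := mul_one _
            _ ≤ c := ha₂c
        exact mul_le_mul_of_nonneg_left h2 (by positivity)
      calc a₁ * a₂ * i₁ * i₂ ≤ a₁ * i₁ * c := h1
        _ = c * (a₁ * i₁) := by ring
        _ ≤ c * (a₁ * i₁ + a₂ * i₂) := by
            apply mul_le_mul_of_nonneg_left _ hc0
            nlinarith
        _ = c * (h₁ x + h₂ x) := by rw [hh₁x, hh₂x]
    · have hx₁ : r ≤ 2 * ‖x₁ - x‖ := by linarith
      have ha₁c : a₁ ≤ c := key _ (norm_nonneg _) hx₁
      have h1 : a₁ * a₂ * i₁ * i₂ ≤ a₂ * i₂ * c := by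
        have : a₁ * a₂ * i₁ * i₂ = (a₂ * i₂) * (a₁ * i₁) := by ring
        rw [this]
        have h2 : a₁ * i₁ ≤ c := by
          calc a₁ * i₁ ≤ a₁ * 1 := mul_le_mul_of_nonneg_left hi₁01.2 ha₁0
            _ = a₁ := mul_one _
            _ ≤ c := ha₁c
        exact mul_le_mul_of_nonneg_left h2 (by positivity)
      calc a₁ * a₂ * i₁ * i₂ ≤ a₂ * i₂ * c := h1
        _ = c * (a₂ * i₂) := by ring
        _ ≤ c * (a₁ * i₁ + a₂ * i₂) := by
            apply mul_le_mul_of_nonneg_left _ hc0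
            nlinarith
        _ = c * (h₁ x + h₂ x) := by rw [hh₁x, hh₂x]
  -- main chain
  have hstep1 : ∫ x : Fin d → ℝ,
      (1 / (1 + ‖x₁ - x‖ ^ (d + 1))) * (1 / (1 + ‖x₂ - x‖ ^ (d + 1))) *
        (if sameCell d L N x x₁ then (0:ℝ) else 1) *
        (if sameCell d L N x x₂ then (0:ℝ) else 1)
      ≤ ∫ x : Fin d → ℝ, c * (h₁ x + h₂ x) := by
    refine integral_mono_of_nonneg (Eventually.of_forall fun x => ?_)
      ((hint₁.add hint₂).const_mul c) (Eventually.of_forall hptwise)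
    have hi1 : (0:ℝ) ≤ (if sameCell d L N x x₁ then (0:ℝ) else 1) := by split <;> norm_num
    have hi2 : (0:ℝ) ≤ (if sameCell d L N x x₂ then (0:ℝ) else 1) := by split <;> norm_num
    positivity
  have hstep2 : ∫ x : Fin d → ℝ, c * (h₁ x + h₂ x) = c * ((∫ x, h₁ x) + ∫ x, h₂ x) := by
    rw [integral_const_mul, integral_add hint₁ hint₂]
  have hDm0 : 0 ≤ Dm := le_min Metric.infDist_nonneg Metric.infDist_nonneg
  have hm₁ : ∫ x, h₁ x ≤ fTail d Dm :=
    le_trans (integral_kernel_indicator_le d hd L N x₁)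
      (fTail_anti d hDm0 (min_le_left _ _))
  have hm₂ : ∫ x, h₂ x ≤ fTail d Dm :=
    le_trans (integral_kernel_indicator_le d hd L N x₂)
      (fTail_anti d hDm0 (min_le_right _ _))
  calc ∫ x : Fin d → ℝ,
        (1 / (1 + ‖x₁ - x‖ ^ (d + 1))) * (1 / (1 + ‖x₂ - x‖ ^ (d + 1))) *
          (if sameCell d L N x x₁ then (0:ℝ) else 1) *
          (if sameCell d L N x x₂ then (0:ℝ) else 1)
      ≤ c * ((∫ x, h₁ x) + ∫ x, h₂ x) := by rw [← hstep2]; exact hstep1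
    _ ≤ c * (fTail d Dm + fTail d Dm) := by
        apply mul_le_mul_of_nonneg_left _ hc0
        exact add_le_add hm₁ hm₂
    _ = 2 ^ (d + 2) * fTail d Dm * (1 / (1 + r ^ (d + 1))) := by
        rw [hc]; ring
end
end
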